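/- Fix ε > 0 and let B_ε = { z ∈ ℂ : |z − 1| ≤ 1 − ε }. Then there exists N such that for all n ≥ N, D_{2n}(a) ≠ 0 for all a ∈ B_ε. -/

import Mathlib

/-- The adsorbing Dyck path partition function `D_{2n}(a)` for complex `a`. -/
noncomputable def dyckPFC (n : ℕ) (a : ℂ) : ℂ :=
  ∑ ℓ ∈ Finset.range (n + 1),
    ((2 * ℓ + 1 : ℂ) / (n + ℓ + 1)) * (Nat.choose (2 * n) (n + ℓ) : ℂ) * (a - 1) ^ ℓ

open Filter

noncomputable def catC (n ℓ : ℕ) : ℝ :=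
  (2 * (ℓ:ℝ) + 1) / ((n:ℝ) + ℓ + 1) * (Nat.choose (2 * n) (n + ℓ) : ℝ)

lemma catC_zero (n : ℕ) : catC n 0 = (Nat.choose (2 * n) n : ℝ) / ((n:ℝ) + 1) := by
  simp [catC]; ring

lemma catC_zero_pos (n : ℕ) : 0 < catC n 0 := by
  rw [catC_zero]
  have : 0 < Nat.choose (2 * n) n := Nat.choose_pos (by omega)
  positivity

lemma catC_nonneg (n ℓ : ℕ) : 0 ≤ catC n ℓ := by
  unfold catC; positivity

lemma catC_le (n ℓ : ℕ) : catC n ℓ ≤ (2 * (ℓ:ℝ) + 1) * catC n 0 := by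
  rw [catC_zero]; unfold catC
  have h1 : (Nat.choose (2 * n) (n + ℓ) : ℝ) ≤ (Nat.choose (2 * n) n : ℝ) := by
    have := Nat.choose_le_middle (n + ℓ) (2 * n)
    have h2 : 2 * n / 2 = n := by omega
    rw [h2] at this
    exact_mod_cast this
  have h3 : (0:ℝ) < (n:ℝ) + 1 := by positivity
  have h4 : (0:ℝ) < (n:ℝ) + ℓ + 1 := by positivity
  have h5 : ((n:ℝ)+1) ≤ (n:ℝ) + ℓ + 1 := by
    have : (0:ℝ) ≤ (ℓ:ℝ) := Nat.cast_nonneg ℓ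
    linarith
  calc (2*(ℓ:ℝ)+1)/((n:ℝ)+ℓ+1) * (Nat.choose (2*n) (n+ℓ) : ℝ)
      ≤ (2*(ℓ:ℝ)+1)/((n:ℝ)+1) * (Nat.choose (2*n) n : ℝ) := by
        apply mul_le_mul (div_le_div₀ (by positivity) le_rfl h3 h5) h1 (by positivity) (by positivity)
    _ = (2*(ℓ:ℝ)+1) * ((Nat.choose (2*n) n : ℝ) / ((n:ℝ)+1)) := by ring

lemma choose_prod_id (n : ℕ) : ∀ ℓ : ℕ, ℓ ≤ n →
    (Nat.choose (2 * n) (n + ℓ) : ℝ) * ∏ j ∈ Finset.range ℓ, ((n:ℝ) + j + 1) =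
      (Nat.choose (2 * n) n : ℝ) * ∏ j ∈ Finset.range ℓ, ((n:ℝ) - j) := by
  intro ℓ
  induction ℓ with
  | zero => simp
  | succ k ih =>
    intro hk
    have hkn : k ≤ n := by omega
    have hrec := Nat.choose_succ_right_eq (2 * n) (n + k)
    have hsub : 2 * n - (n + k) = n - k := by omega
    rw [hsub] at hrec
    have hrecR : (Nat.choose (2 * n) (n + k + 1) : ℝ) * ((n:ℝ) + k + 1) =
        (Nat.choose (2 * n) (n + k) : ℝ) * ((n:ℝ) - k) := by
      have := congrArg (fun m : ℕ => (m : ℝ)) hrec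
      push_cast at this
      rw [Nat.cast_sub hkn] at this
      push_cast at this
      convert this using 2
    rw [Finset.prod_range_succ, Finset.prod_range_succ]
    have : (Nat.choose (2*n) (n+(k+1)) : ℝ) = (Nat.choose (2*n) (n+k+1) : ℝ) := by norm_num [Nat.add_assoc]
    rw [this]
    calc (Nat.choose (2*n) (n+k+1) : ℝ) * ((∏ j ∈ Finset.range k, ((n:ℝ)+j+1)) * ((n:ℝ)+k+1))
        = ((Nat.choose (2*n) (n+k+1) : ℝ) * ((n:ℝ)+k+1)) * ∏ j ∈ Finset.range k, ((n:ℝ)+j+1) := by ring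
      _ = ((Nat.choose (2*n) (n+k) : ℝ) * ((n:ℝ)-k)) * ∏ j ∈ Finset.range k, ((n:ℝ)+j+1) := by rw [hrecR]
      _ = ((Nat.choose (2*n) (n+k) : ℝ) * ∏ j ∈ Finset.range k, ((n:ℝ)+j+1)) * ((n:ℝ)-k) := by ring
      _ = ((Nat.choose (2*n) n : ℝ) * ∏ j ∈ Finset.range k, ((n:ℝ)-j)) * ((n:ℝ)-k) := by rw [ih hkn]
      _ = (Nat.choose (2*n) n : ℝ) * ((∏ j ∈ Finset.range k, ((n:ℝ)-j)) * ((n:ℝ)-k)) := by ring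

lemma q_eq (n ℓ : ℕ) (h : ℓ ≤ n) :
    catC n ℓ / catC n 0 =
      (2 * (ℓ:ℝ) + 1) * (((n:ℝ) + 1) / ((n:ℝ) + ℓ + 1)) *
        ∏ j ∈ Finset.range ℓ, (((n:ℝ) - j) / ((n:ℝ) + j + 1)) := by
  have hid := choose_prod_id n ℓ h
  have hP : ∀ j ∈ Finset.range ℓ, ((n:ℝ) + j + 1) ≠ 0 := fun j _ => by positivity
  have hPne : (∏ j ∈ Finset.range ℓ, ((n:ℝ) + j + 1)) ≠ 0 := Finset.prod_ne_zero_iff.2 hP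
  have hC0 : (Nat.choose (2 * n) n : ℝ) ≠ 0 := by
    have : 0 < Nat.choose (2 * n) n := Nat.choose_pos (by omega)
    positivity
  have hCl : (Nat.choose (2 * n) (n + ℓ) : ℝ) =
      (Nat.choose (2 * n) n : ℝ) * (∏ j ∈ Finset.range ℓ, ((n:ℝ) - j)) /
        (∏ j ∈ Finset.range ℓ, ((n:ℝ) + j + 1)) := by
    rw [eq_div_iff hPne]; rw [hid]
  rw [catC_zero]
  unfold catC
  rw [hCl, Finset.prod_div_distrib]
  have h3 : ((n:ℝ) + 1) ≠ 0 := by positivity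
  have h4 : ((n:ℝ) + ℓ + 1) ≠ 0 := by positivity
  field_simp

lemma aux_tendsto_ratio (b c : ℝ) :
    Tendsto (fun n : ℕ => ((n:ℝ) + b) / ((n:ℝ) + c)) atTop (nhds 1) := by
  have h1 : Tendsto (fun n : ℕ => (n:ℝ) + c) atTop atTop :=
    tendsto_atTop_add_const_right _ c tendsto_natCast_atTop_atTop
  have h0 : Tendsto (fun n : ℕ => (b - c) / ((n:ℝ) + c)) atTop (nhds 0) :=
    Tendsto.div_atTop tendsto_const_nhds h1
  have h2 : Tendsto (fun n : ℕ => 1 + (b - c) / ((n:ℝ) + c)) atTop (nhds 1) := by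
    simpa using tendsto_const_nhds.add h0
  apply h2.congr'
  filter_upwards [h1.eventually_gt_atTop 0] with n hn
  have hne : ((n:ℝ) + c) ≠ 0 := ne_of_gt hn
  field_simp
  ring

lemma q_tendsto (ℓ : ℕ) :
    Tendsto (fun n : ℕ => catC n ℓ / catC n 0) atTop (nhds (2 * (ℓ:ℝ) + 1)) := by
  have hmid : Tendsto (fun n : ℕ => ((n:ℝ) + 1) / ((n:ℝ) + ℓ + 1)) atTop (nhds 1) := by
    simpa only [add_assoc] using aux_tendsto_ratio 1 ((ℓ:ℝ) + 1)
  have hprod : Tendsto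
      (fun n : ℕ => ∏ j ∈ Finset.range ℓ, (((n:ℝ) - j) / ((n:ℝ) + j + 1))) atTop
      (nhds (∏ j ∈ Finset.range ℓ, (1:ℝ))) := by
    apply tendsto_finset_prod
    intro j _
    simpa only [sub_eq_add_neg, add_assoc] using aux_tendsto_ratio (-(j:ℝ)) ((j:ℝ) + 1)
  have hF : Tendsto
      (fun n : ℕ => (2 * (ℓ:ℝ) + 1) * (((n:ℝ) + 1) / ((n:ℝ) + ℓ + 1)) *
        ∏ j ∈ Finset.range ℓ, (((n:ℝ) - j) / ((n:ℝ) + j + 1))) atTop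
      (nhds ((2 * (ℓ:ℝ) + 1) * 1 * ∏ j ∈ Finset.range ℓ, (1:ℝ))) :=
    (tendsto_const_nhds.mul hmid).mul hprod
  have heq : (fun n : ℕ => (2 * (ℓ:ℝ) + 1) * (((n:ℝ) + 1) / ((n:ℝ) + ℓ + 1)) *
        ∏ j ∈ Finset.range ℓ, (((n:ℝ) - j) / ((n:ℝ) + j + 1)))
      =ᶠ[atTop] (fun n : ℕ => catC n ℓ / catC n 0) := by
    filter_upwards [eventually_ge_atTop ℓ] with n hn
    exact (q_eq n ℓ hn).symm
  have := hF.congr' heq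
  simpa using this

lemma bound_summable {r : ℝ} (hr0 : 0 ≤ r) (hr1 : r < 1) :
    Summable (fun ℓ : ℕ => (2 * (ℓ:ℝ) + 1) * r ^ ℓ) := by
  have h1 : Summable (fun ℓ : ℕ => (ℓ:ℝ) * r ^ ℓ) := by
    simpa using summable_pow_mul_geometric_of_norm_lt_one (R := ℝ) 1
      (r := r) (by rwa [Real.norm_eq_abs, abs_of_nonneg hr0])
  have h2 : Summable (fun ℓ : ℕ => r ^ ℓ) := summable_geometric_of_lt_one hr0 hr1
  have := (h1.mul_left 2).add h2
  apply this.congr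
  intro ℓ
  ring

lemma S_tendsto {r : ℝ} (hr0 : 0 ≤ r) (hr1 : r < 1) :
    Tendsto (fun n : ℕ => ∑' ℓ : ℕ, ((2 * (ℓ:ℝ) + 1) - catC n ℓ / catC n 0) * r ^ ℓ)
      atTop (nhds 0) := by
  have hb := bound_summable hr0 hr1
  have hlim : ∀ ℓ : ℕ, Tendsto
      (fun n : ℕ => ((2 * (ℓ:ℝ) + 1) - catC n ℓ / catC n 0) * r ^ ℓ) atTop
      (nhds ((fun _ : ℕ => (0:ℝ)) ℓ)) := by
    intro ℓ
    have h := ((tendsto_const_nhds (x := (2 * (ℓ:ℝ) + 1))).sub (q_tendsto ℓ)).mul_const (r ^ ℓ)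
    simpa using h
  have hbound : ∀ᶠ n in (atTop : Filter ℕ), ∀ ℓ : ℕ,
      ‖((2 * (ℓ:ℝ) + 1) - catC n ℓ / catC n 0) * r ^ ℓ‖ ≤ (2 * (ℓ:ℝ) + 1) * r ^ ℓ := by
    filter_upwards with n ℓ
    rw [Real.norm_eq_abs, abs_mul, abs_pow, abs_of_nonneg hr0]
    have hq0 : 0 ≤ catC n ℓ / catC n 0 := div_nonneg (catC_nonneg n ℓ) (catC_zero_pos n).le
    have hq1 : catC n ℓ / catC n 0 ≤ 2 * (ℓ:ℝ) + 1 := by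
      rw [div_le_iff₀ (catC_zero_pos n)]
      have := catC_le n ℓ
      linarith
    have habs : |(2 * (ℓ:ℝ) + 1) - catC n ℓ / catC n 0| ≤ 2 * (ℓ:ℝ) + 1 := by
      rw [abs_of_nonneg (by linarith)]; linarith
    exact mul_le_mul_of_nonneg_right habs (pow_nonneg hr0 ℓ)
  have := tendsto_tsum_of_dominated_convergence hb hlim hbound
  simpa using this

lemma q_nonneg (n ℓ : ℕ) : 0 ≤ catC n ℓ / catC n 0 :=
  div_nonneg (catC_nonneg n ℓ) (catC_zero_pos n).le

lemma q_le (n ℓ : ℕ) : catC n ℓ / catC n 0 ≤ 2 * (ℓ:ℝ) + 1 := by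
  rw [div_le_iff₀ (catC_zero_pos n)]
  have := catC_le n ℓ
  linarith

theorem dyckPF_no_zeros_near_one (ε : ℝ) (hε : 0 < ε) :
    ∃ N : ℕ, ∀ n ≥ N, ∀ a : ℂ, ‖a - 1‖ ≤ 1 - ε → dyckPFC n a ≠ 0 := by
  set e := min ε (1/2) with he_def
  have he0 : 0 < e := lt_min hε (by norm_num)
  have he2 : e ≤ 1/2 := min_le_right _ _
  set r := 1 - e with hr_def
  have hr0 : (0:ℝ) ≤ r := by simp only [hr_def]; linarith
  have hr1 : r < 1 := by simp only [hr_def]; linarith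
  have hS := S_tendsto (r := r) hr0 hr1
  have hev : ∀ᶠ n in atTop,
      (∑' ℓ : ℕ, ((2 * (ℓ:ℝ) + 1) - catC n ℓ / catC n 0) * r ^ ℓ) < e / 8 :=
    hS.eventually_lt_const (by positivity)
  obtain ⟨N, hN⟩ := eventually_atTop.1 hev
  refine ⟨N, fun n hn a ha => ?_⟩
  set w := a - 1 with hw_def
  have hwr : ‖w‖ ≤ r := by
    have : (1:ℝ) - ε ≤ r := by
      have : e ≤ ε := min_le_left _ _
      simp only [hr_def]; linarith
    linarith [ha]
  have hw1 : ‖w‖ < 1 := lt_of_le_of_lt hwr hr1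
  have hwne : (1:ℂ) - w ≠ 0 := by
    intro h
    have : w = 1 := by linear_combination -h
    rw [this] at hw1
    simp at hw1
  set c0 := catC n 0 with hc0_def
  have hc0 : 0 < c0 := catC_zero_pos n
  -- the two series
  set f1 : ℕ → ℂ := fun ℓ => ((catC n ℓ : ℝ) : ℂ) * w ^ ℓ with hf1
  set f2 : ℕ → ℂ := fun ℓ => (((2 * (ℓ:ℝ) + 1) * c0 : ℝ) : ℂ) * w ^ ℓ with hf2
  have hbsum : Summable (fun ℓ : ℕ => (2 * (ℓ:ℝ) + 1) * c0 * r ^ ℓ) := by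
    apply ((bound_summable hr0 hr1).mul_left c0).congr
    intro ℓ; ring
  have hn1 : ∀ ℓ : ℕ, ‖f1 ℓ‖ ≤ (2 * (ℓ:ℝ) + 1) * c0 * r ^ ℓ := by
    intro ℓ
    rw [hf1]
    simp only [norm_mul, Complex.norm_real, norm_pow, Real.norm_eq_abs,
      abs_of_nonneg (catC_nonneg n ℓ)]
    have h1 : catC n ℓ ≤ (2 * (ℓ:ℝ) + 1) * c0 := catC_le n ℓ
    have h2 : ‖w‖ ^ ℓ ≤ r ^ ℓ := pow_le_pow_left₀ (norm_nonneg w) hwr ℓ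
    calc catC n ℓ * ‖w‖ ^ ℓ ≤ ((2 * (ℓ:ℝ) + 1) * c0) * r ^ ℓ := by
          apply mul_le_mul h1 h2 (pow_nonneg (norm_nonneg w) ℓ) (by positivity)
      _ = (2 * (ℓ:ℝ) + 1) * c0 * r ^ ℓ := by ring
  have hn2 : ∀ ℓ : ℕ, ‖f2 ℓ‖ ≤ (2 * (ℓ:ℝ) + 1) * c0 * r ^ ℓ := by
    intro ℓ
    rw [hf2, norm_mul, Complex.norm_real, Real.norm_eq_abs, norm_pow,
      abs_of_nonneg (by positivity : (0:ℝ) ≤ (2 * (ℓ:ℝ) + 1) * c0)]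
    exact mul_le_mul_of_nonneg_left (pow_le_pow_left₀ (norm_nonneg w) hwr ℓ) (by positivity)
  have hs1 : Summable f1 := Summable.of_norm_bounded hbsum hn1
  have hs2 : Summable f2 := Summable.of_norm_bounded hbsum hn2
  -- dyckPFC equals the f1 series
  have hD : dyckPFC n a = ∑' ℓ, f1 ℓ := by
    have hzero : ∀ ℓ ∉ Finset.range (n + 1), f1 ℓ = 0 := by
      intro ℓ hℓ
      rw [Finset.mem_range, not_lt] at hℓ
      have : Nat.choose (2 * n) (n + ℓ) = 0 := Nat.choose_eq_zero_of_lt (by omega)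
      rw [hf1]
      simp [catC, this]
    rw [tsum_eq_sum hzero]
    unfold dyckPFC
    refine Finset.sum_congr rfl fun ℓ _ => ?_
    rw [hf1]
    simp only [catC]
    push_cast
    ring
  -- closed form for the f2 series
  have s1 : Summable (fun ℓ : ℕ => (ℓ:ℂ) * w ^ ℓ) := by
    simpa using summable_pow_mul_geometric_of_norm_lt_one (R := ℂ) 1 hw1
  have s2 : Summable (fun ℓ : ℕ => w ^ ℓ) := summable_geometric_of_norm_lt_one hw1
  have hT : (∑' ℓ : ℕ, (2 * (ℓ:ℂ) + 1) * w ^ ℓ) = (1 + w) / (1 - w) ^ 2 := by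
    have hfun : (fun ℓ : ℕ => (2 * (ℓ:ℂ) + 1) * w ^ ℓ)
        = fun ℓ : ℕ => 2 * ((ℓ:ℂ) * w ^ ℓ) + w ^ ℓ := funext fun ℓ => by ring
    rw [hfun, Summable.tsum_add (s1.mul_left 2) s2, tsum_mul_left,
      tsum_coe_mul_geometric_of_norm_lt_one hw1, tsum_geometric_of_norm_lt_one hw1]
    field_simp
    ring
  have hf2T : (∑' ℓ, f2 ℓ) = (c0 : ℂ) * ((1 + w) / (1 - w) ^ 2) := by
    rw [← hT]
    rw [← tsum_mul_left]
    refine tsum_congr fun ℓ => ?_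
    rw [hf2]
    push_cast
    ring
  -- lower bound on the f2 series
  have hnum : e ≤ ‖1 + w‖ := by
    have h := norm_sub_norm_le (1:ℂ) (-w)
    rw [sub_neg_eq_add, norm_neg, norm_one] at h
    simp only [hr_def] at hwr
    linarith
  have hden : ‖1 - w‖ ^ 2 ≤ 4 := by
    have h := norm_sub_le (1:ℂ) w
    rw [norm_one] at h
    have h1 : ‖1 - w‖ ≤ 2 := by linarith
    nlinarith [norm_nonneg ((1:ℂ) - w)]
  have hdenpos : 0 < ‖1 - w‖ ^ 2 := pow_pos (norm_pos_iff.mpr hwne) 2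
  have hTlow : c0 * (e / 4) ≤ ‖∑' ℓ, f2 ℓ‖ := by
    rw [hf2T, norm_mul, Complex.norm_real, Real.norm_eq_abs, abs_of_pos hc0,
      norm_div, norm_pow]
    have : e / 4 ≤ ‖1 + w‖ / ‖1 - w‖ ^ 2 :=
      div_le_div₀ (norm_nonneg _) hnum hdenpos hden
    calc c0 * (e / 4) ≤ c0 * (‖1 + w‖ / ‖1 - w‖ ^ 2) :=
          mul_le_mul_of_nonneg_left this hc0.le
      _ = c0 * (‖1 + w‖ / ‖1 - w‖ ^ 2) := rfl
  -- difference bound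
  have hdiffnorm : ∀ ℓ : ℕ, ‖f2 ℓ - f1 ℓ‖ ≤ c0 * (((2 * (ℓ:ℝ) + 1) - catC n ℓ / catC n 0) * r ^ ℓ) := by
    intro ℓ
    have hcomb : f2 ℓ - f1 ℓ = (((2 * (ℓ:ℝ) + 1) * c0 - catC n ℓ : ℝ) : ℂ) * w ^ ℓ := by
      rw [hf1, hf2]; push_cast; ring
    rw [hcomb]
    simp only [norm_mul, Complex.norm_real, norm_pow, Real.norm_eq_abs]
    have hnn : (0:ℝ) ≤ (2 * (ℓ:ℝ) + 1) * c0 - catC n ℓ := by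
      have := catC_le n ℓ; linarith
    rw [abs_of_nonneg hnn]
    have hq : c0 * (catC n ℓ / catC n 0) = catC n ℓ := by
      rw [hc0_def]
      field_simp
      exact mul_div_cancel_left₀ _ (catC_zero_pos n).ne'
    have heqs : c0 * (((2 * (ℓ:ℝ) + 1) - catC n ℓ / catC n 0) * r ^ ℓ)
        = ((2 * (ℓ:ℝ) + 1) * c0 - catC n ℓ) * r ^ ℓ := by
      have h' : c0 * (((2 * (ℓ:ℝ) + 1) - catC n ℓ / catC n 0) * r ^ ℓ)
          = ((2 * (ℓ:ℝ) + 1) * c0 - c0 * (catC n ℓ / catC n 0)) * r ^ ℓ := by ring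
      rw [h', hq]
    rw [heqs]
    apply mul_le_mul_of_nonneg_left (pow_le_pow_left₀ (norm_nonneg w) hwr ℓ) hnn
  have hSsum : Summable (fun ℓ : ℕ => c0 * (((2 * (ℓ:ℝ) + 1) - catC n ℓ / catC n 0) * r ^ ℓ)) := by
    apply Summable.of_norm_bounded hbsum
    intro ℓ
    rw [Real.norm_eq_abs, abs_mul, abs_of_pos hc0, abs_mul, abs_pow, abs_of_nonneg hr0]
    have h1 : |(2 * (ℓ:ℝ) + 1) - catC n ℓ / catC n 0| ≤ 2 * (ℓ:ℝ) + 1 := by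
      rw [abs_of_nonneg (by linarith [q_le n ℓ])]
      linarith [q_nonneg n ℓ]
    have h2 := mul_le_mul_of_nonneg_right h1 (pow_nonneg hr0 ℓ)
    calc c0 * (|(2 * (ℓ:ℝ) + 1) - catC n ℓ / catC n 0| * r ^ ℓ)
        ≤ c0 * ((2 * (ℓ:ℝ) + 1) * r ^ ℓ) := mul_le_mul_of_nonneg_left h2 hc0.le
      _ = (2 * (ℓ:ℝ) + 1) * c0 * r ^ ℓ := by ring
  have hnorm_sum : Summable (fun ℓ : ℕ => ‖f2 ℓ - f1 ℓ‖) := by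
    apply Summable.of_nonneg_of_le (fun ℓ => norm_nonneg _) hdiffnorm hSsum
  have hdiff : ‖(∑' ℓ, f2 ℓ) - (∑' ℓ, f1 ℓ)‖ < c0 * (e / 8) := by
    rw [← Summable.tsum_sub hs2 hs1]
    calc ‖∑' ℓ, (f2 ℓ - f1 ℓ)‖ ≤ ∑' ℓ, ‖f2 ℓ - f1 ℓ‖ := norm_tsum_le_tsum_norm hnorm_sum
      _ ≤ ∑' ℓ : ℕ, c0 * (((2 * (ℓ:ℝ) + 1) - catC n ℓ / catC n 0) * r ^ ℓ) :=
          Summable.tsum_le_tsum hdiffnorm hnorm_sum hSsum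
      _ = c0 * ∑' ℓ : ℕ, (((2 * (ℓ:ℝ) + 1) - catC n ℓ / catC n 0) * r ^ ℓ) := tsum_mul_left
      _ < c0 * (e / 8) := by
          apply mul_lt_mul_of_pos_left (hN n hn) hc0
  -- conclude
  intro h0
  rw [hD] at h0
  rw [h0, sub_zero] at hdiff
  have : c0 * (e / 8) < c0 * (e / 4) := by
    apply mul_lt_mul_of_pos_left (by linarith) hc0
  linarith [hTlow, hdiff]
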